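/- For every real number ρ, setting η_n := 2·a_n·ρ^n, the formal power series identity (1 + (1/2)·Σ_{n≥1} η_n z^n) · G_ρ(z) = z · G_ρ'(z) holds in ℝ[[z]], where G_ρ(z) := 2·A(ρz/2) is the power series obtained from A by the substitution z ↦ ρz/2 (i.e. the Maclaurin series of z ↦ 2·arcsinh(ρz/2)). This is Weingart's generating function 1 + (1/2)Σ_n η_n z^n = z·(d/dz)·log(2·arcsinh(ρz/2)) for the Dirac eta invariants η_n of the (2n−1)-dimensional Berger spheres with squashing parameter ρ. -/

import Mathlib

open PowerSeries

/-- Formal derivative of a real power series. -/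
noncomputable def D (f : PowerSeries ℝ) : PowerSeries ℝ :=
  PowerSeries.mk fun n => ((n + 1 : ℕ) : ℝ) * PowerSeries.coeff (R := ℝ) (n + 1) f

/-- The power series `2·sinh(t/2) = exp(t/2) − exp(−t/2)` over `ℚ`. -/
noncomputable def twoSinhHalf : PowerSeries ℚ :=
  PowerSeries.rescale (1 / 2 : ℚ) (PowerSeries.exp ℚ)
    - PowerSeries.rescale (-(1 / 2) : ℚ) (PowerSeries.exp ℚ)

/-- The Maclaurin series of `arcsinh` over `ℝ`:
`A(z) = Σ_{k≥0} (−1)^k (2k)!/(4^k (k!)² (2k+1)) z^{2k+1}`. -/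
noncomputable def arsinhSeriesR : PowerSeries ℝ :=
  PowerSeries.mk fun k =>
    if Odd k then
      (-1 : ℝ) ^ (k / 2) * (Nat.factorial (k - 1) : ℝ) / (4 ^ (k / 2) * (Nat.factorial (k / 2) : ℝ) ^ 2 * k)
    else 0

namespace WAux

open Finset

local notation "dd" => PowerSeries.derivative ℝ
local notation "cf" => PowerSeries.coeff (R := ℝ)

lemma D_eq (f : PowerSeries ℝ) : D f = dd f := by
  ext n
  rw [D, coeff_mk, coeff_derivative]
  push_cast; ring

variable {F : PowerSeries ℝ}

lemma coeff_pow_eq_zero (hF : constantCoeff (R := ℝ) F = 0) {k n : ℕ} (h : n < k) :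
    cf n (F ^ k) = 0 :=
  X_pow_dvd_iff.mp (pow_dvd_pow_of_dvd (X_dvd_iff.mpr hF) k) n h

/-- Composition of power series, valid when `F` has zero constant term. -/
noncomputable def pcomp (g F : PowerSeries ℝ) : PowerSeries ℝ :=
  PowerSeries.mk fun n => ∑ k ∈ range (n + 1), cf k g * cf n (F ^ k)

lemma coeff_pcomp (g : PowerSeries ℝ) (n : ℕ) :
    cf n (pcomp g F) = ∑ k ∈ range (n + 1), cf k g * cf n (F ^ k) := coeff_mk _ _

lemma coeff_pcomp_mul (hF : constantCoeff (R := ℝ) F = 0) (g h : PowerSeries ℝ) (n : ℕ) :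
    cf n (pcomp g F * h) = ∑ k ∈ range (n + 1), cf k g * cf n (F ^ k * h) := by
  rw [coeff_mul]
  have step : ∀ p ∈ antidiagonal n,
      cf p.1 (pcomp g F) * cf p.2 h
        = ∑ k ∈ range (n + 1), cf k g * (cf p.1 (F ^ k) * cf p.2 h) := by
    intro p hp
    rw [Finset.HasAntidiagonal.mem_antidiagonal] at hp
    rw [coeff_pcomp, Finset.sum_mul]
    rw [← Finset.sum_subset (Finset.range_subset_range.mpr (by omega : p.1 + 1 ≤ n + 1))]
    · exact Finset.sum_congr rfl fun k _ => by ring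
    · intro k _ hk
      rw [Finset.mem_range, not_lt] at hk
      simp [coeff_pow_eq_zero hF (show p.1 < k by omega)]
  rw [Finset.sum_congr rfl step, Finset.sum_comm]
  exact Finset.sum_congr rfl fun k _ => by rw [coeff_mul, Finset.mul_sum]

lemma pcomp_mul (hF : constantCoeff (R := ℝ) F = 0) (a b : PowerSeries ℝ) :
    pcomp (a * b) F = pcomp a F * pcomp b F := by
  ext n
  have hswap : ∀ k, cf n (F ^ k * pcomp b F) = cf n (pcomp b F * F ^ k) := fun k => by
    rw [mul_comm]
  rw [coeff_pcomp_mul hF]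
  simp only [hswap, coeff_pcomp_mul hF b]
  -- RHS now: ∑ k, cf k a * ∑ j, cf j b * cf n (F^j * F^k)
  have RHS : ∑ k ∈ range (n + 1), cf k a * ∑ j ∈ range (n + 1), cf j b * cf n (F ^ j * F ^ k)
      = ∑ p ∈ range (n + 1) ×ˢ range (n + 1), cf p.1 a * cf p.2 b * cf n (F ^ (p.1 + p.2)) := by
    rw [Finset.sum_product]
    refine Finset.sum_congr rfl fun k _ => ?_
    rw [Finset.mul_sum]
    refine Finset.sum_congr rfl fun j _ => ?_
    rw [← pow_add]
    ring_nf
  rw [RHS, coeff_pcomp]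
  set f : ℕ × ℕ → ℝ := fun p => cf p.1 a * cf p.2 b * cf n (F ^ (p.1 + p.2)) with hf
  have e1 : ∑ p ∈ range (n + 1) ×ˢ range (n + 1), f p
      = ∑ p ∈ (range (n + 1) ×ˢ range (n + 1)).filter (fun p => p.1 + p.2 ≤ n), f p := by
    refine (Finset.sum_filter_of_ne ?_).symm
    intro p _ hne
    by_contra hgt
    exact hne (by rw [hf]; simp [coeff_pow_eq_zero hF (show n < p.1 + p.2 by omega)])
  have hT : (range (n + 1) ×ˢ range (n + 1)).filter (fun p => p.1 + p.2 ≤ n)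
      = (range (n + 1)).biUnion (fun m => antidiagonal m) := by
    ext p
    simp only [Finset.mem_filter, Finset.mem_product, Finset.mem_range, Finset.mem_biUnion,
      Finset.HasAntidiagonal.mem_antidiagonal]
    constructor
    · rintro ⟨⟨h1, h2⟩, h3⟩; exact ⟨p.1 + p.2, by omega, rfl⟩
    · rintro ⟨m, hm, rfl⟩; omega
  have e2 : ∑ p ∈ (range (n + 1)).biUnion (fun m => antidiagonal m), f p
      = ∑ m ∈ range (n + 1), ∑ p ∈ antidiagonal m, f p := by
    refine Finset.sum_biUnion ?_
    intro i _ j _ hij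
    refine Finset.disjoint_left.mpr fun p hpi hpj => hij ?_
    rw [Finset.HasAntidiagonal.mem_antidiagonal] at hpi hpj
    omega
  rw [e1, hT, e2]
  refine Finset.sum_congr rfl fun m hm => ?_
  rw [coeff_mul, Finset.sum_mul]
  refine Finset.sum_congr rfl fun p hp => ?_
  rw [Finset.HasAntidiagonal.mem_antidiagonal] at hp
  rw [hf]
  simp only [hp]


lemma pcomp_C (hF : constantCoeff (R := ℝ) F = 0) (c : ℝ) : pcomp (C (R := ℝ) c) F = C (R := ℝ) c := by
  ext n
  rw [coeff_pcomp]
  simp [coeff_C, ite_mul, Finset.sum_ite_eq']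

lemma pcomp_X (hF : constantCoeff (R := ℝ) F = 0) : pcomp X F = F := by
  ext n
  rw [coeff_pcomp]
  simp only [coeff_X, ite_mul, zero_mul, one_mul, Finset.sum_ite_eq', Finset.mem_range]
  rcases n with _ | n
  · simp [hF]
  · simp

lemma pcomp_pow (hF : constantCoeff (R := ℝ) F = 0) (a : PowerSeries ℝ) (n : ℕ) :
    pcomp (a ^ n) F = pcomp a F ^ n := by
  induction n with
  | zero => simpa using pcomp_C hF 1
  | succ n ih => rw [pow_succ, pow_succ, pcomp_mul hF, ih]

lemma d_pcomp (hF : constantCoeff (R := ℝ) F = 0) (g : PowerSeries ℝ) :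
    dd (pcomp g F) = pcomp (dd g) F * dd F := by
  ext n
  rw [coeff_derivative, coeff_pcomp, coeff_pcomp_mul hF]
  calc (∑ k ∈ range (n + 1 + 1), cf k g * cf n.succ (F ^ k)) * ((n : ℝ) + 1)
      = ∑ k ∈ range (n + 2), cf k g * (cf (n+1) (F ^ k) * ((n:ℝ) + 1)) := by
        rw [Finset.sum_mul]; exact Finset.sum_congr rfl fun k _ => by ring
    _ = ∑ k ∈ range (n + 2), cf k g * ((k : ℝ) * cf n (F ^ (k-1) * dd F)) := by
        refine Finset.sum_congr rfl fun k _ => ?_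
        congr 1
        have h1 : dd (F ^ k) = (k : ℕ) • (F ^ (k-1) • dd F) := Derivation.leibniz_pow _ F k
        have h2 : cf n (dd (F ^ k)) = (k:ℝ) * cf n (F ^ (k-1) * dd F) := by
          simp only [h1, smul_eq_mul, nsmul_eq_mul]
          rw [show ((k : ℕ) : PowerSeries ℝ) = C (R := ℝ) (k : ℝ) from (map_natCast (C (R := ℝ)) k).symm,
            coeff_C_mul]
        rw [← h2, coeff_derivative]
    _ = ∑ k ∈ range (n + 1), cf (k+1) g * ((k:ℝ) + 1) * cf n (F ^ k * dd F) := by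
        rw [Finset.sum_range_succ' (fun k => cf k g * ((k : ℝ) * cf n (F ^ (k-1) * dd F))) (n+1)]
        simp only [Nat.cast_zero, zero_mul, mul_zero, add_zero]
        refine Finset.sum_congr rfl fun k _ => ?_
        simp only [Nat.add_sub_cancel]
        push_cast; ring
    _ = ∑ k ∈ range (n + 1), cf k (dd g) * cf n (F ^ k * dd F) := by
        refine Finset.sum_congr rfl fun k _ => ?_
        rw [coeff_derivative]


section Key

variable {ψ : PowerSeries ℝ}

lemma dd_X_mul (ψ : PowerSeries ℝ) : dd (X * ψ) = ψ + X * dd ψ := by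
  have := Derivation.leibniz (PowerSeries.derivative ℝ) (X : PowerSeries ℝ) ψ
  rw [this, derivative_X]
  simp only [smul_eq_mul, mul_one]
  ring

lemma star (hψ0 : constantCoeff (R := ℝ) ψ ≠ 0) {k n : ℕ} (hk : k ≤ n) :
    cf n ((X * ψ) ^ k * (dd (X * ψ) * (ψ⁻¹) ^ (n + 1)))
      = if k = n then 1 else 0 := by
  have hunit : ψ * ψ⁻¹ = 1 := PowerSeries.mul_inv_cancel ψ hψ0
  rcases eq_or_lt_of_le hk with rfl | hlt
  · rw [if_pos rfl]
    have hE : (X * ψ) ^ k * (dd (X * ψ) * (ψ⁻¹) ^ (k + 1))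
        = X ^ k * (1 + X * (dd ψ * ψ⁻¹)) := by
      rw [dd_X_mul]
      calc (X * ψ) ^ k * ((ψ + X * dd ψ) * (ψ⁻¹) ^ (k + 1))
          = X ^ k * ((ψ * ψ⁻¹) ^ (k + 1) + X * (dd ψ * ψ⁻¹) * (ψ * ψ⁻¹) ^ k) := by
            ring
        _ = X ^ k * (1 + X * (dd ψ * ψ⁻¹)) := by simp [hunit]
    rw [hE]
    have hc := coeff_X_pow_mul (1 + X * (dd ψ * ψ⁻¹)) k 0
    rw [zero_add] at hc
    rw [hc]
    simp
  · rw [if_neg (by omega)]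
    obtain ⟨j, rfl⟩ : ∃ j, n = k + (j + 1) := ⟨n - k - 1, by omega⟩
    have hv : dd ((ψ⁻¹) ^ (j + 1))
        = ((j + 1 : ℕ) : PowerSeries ℝ) * (-((ψ⁻¹) ^ (j + 2)) * dd ψ) := by
      have h1 : dd ((ψ⁻¹) ^ (j + 1)) = (j + 1 : ℕ) • ((ψ⁻¹) ^ (j + 1 - 1) • dd (ψ⁻¹)) :=
        Derivation.leibniz_pow _ _ (j + 1)
      rw [h1, derivative_inv', nsmul_eq_mul, smul_eq_mul, show j + 1 - 1 = j from rfl]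
      ring
    have hE : (X * ψ) ^ k * (dd (X * ψ) * (ψ⁻¹) ^ (k + (j + 1) + 1))
        = X ^ k * ((ψ⁻¹) ^ (j + 1) + X * (dd ψ * (ψ⁻¹) ^ (j + 2))) := by
      rw [dd_X_mul]
      calc (X * ψ) ^ k * ((ψ + X * dd ψ) * (ψ⁻¹) ^ (k + (j + 1) + 1))
          = X ^ k * ((ψ * ψ⁻¹) ^ (k + 1) * (ψ⁻¹) ^ (j + 1)
              + X * ((ψ * ψ⁻¹) ^ k * (dd ψ * (ψ⁻¹) ^ (j + 2)))) := by
            ring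
        _ = _ := by simp [hunit]
    rw [hE, show k + (j + 1) = (j + 1) + k by omega, coeff_X_pow_mul, map_add,
      coeff_succ_X_mul]
    -- now goal : cf (j+1) (ψ⁻¹ ^ (j+1)) + cf j (dd ψ * ψ⁻¹ ^ (j+2)) = 0
    have hder : cf j (dd ((ψ⁻¹) ^ (j + 1)))
        = cf (j + 1) ((ψ⁻¹) ^ (j + 1)) * ((j : ℝ) + 1) := by
      rw [coeff_derivative]; try push_cast; try ring
    have h2 : cf j (dd ((ψ⁻¹) ^ (j + 1)))
        = ((j : ℝ) + 1) * (-(cf j (dd ψ * (ψ⁻¹) ^ (j + 2)))) := by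
      rw [hv, show ((j + 1 : ℕ) : PowerSeries ℝ) = C (R := ℝ) ((j : ℝ) + 1) by
        rw [← map_natCast (C (R := ℝ)) (j + 1)]; push_cast; ring]
      rw [coeff_C_mul]
      have : -((ψ⁻¹) ^ (j + 2)) * dd ψ = -(dd ψ * (ψ⁻¹) ^ (j + 2)) := by ring
      rw [this, map_neg]
      try ring
    have hne : ((j : ℝ) + 1) ≠ 0 := by positivity
    have h4 : ((j : ℝ) + 1) * (-(cf j (dd ψ * (ψ⁻¹) ^ (j + 2))))
        = ((j : ℝ) + 1) * cf (j + 1) ((ψ⁻¹) ^ (j + 1)) := by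
      rw [← h2, hder]; ring
    have h5 := mul_left_cancel₀ hne h4
    linarith [h5]

lemma key (hψ0 : constantCoeff (R := ℝ) ψ ≠ 0) (g : PowerSeries ℝ) (n : ℕ) :
    cf n (pcomp g (X * ψ) * (dd (X * ψ) * (ψ⁻¹) ^ (n + 1))) = cf n g := by
  have hF0 : constantCoeff (R := ℝ) (X * ψ) = 0 := by simp
  rw [coeff_pcomp_mul hF0]
  have : ∀ k ∈ range (n + 1),
      cf k g * cf n ((X * ψ) ^ k * (dd (X * ψ) * (ψ⁻¹) ^ (n + 1)))
        = if k = n then cf k g else 0 := by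
    intro k hk
    rw [Finset.mem_range] at hk
    rw [star hψ0 (by omega)]
    split <;> simp
  rw [Finset.sum_congr rfl this, Finset.sum_ite_eq' (range (n + 1)) n (fun k => cf k g)]
  simp

end Key

section ODE

lemma coeff_X_pow_mul_of_lt {u : PowerSeries ℝ} {m j : ℕ} (h : m < j) :
    cf m (X ^ j * u) = 0 :=
  X_pow_dvd_iff.mp (dvd_mul_right _ _) m h

lemma coeff_zero_X_mul (u : PowerSeries ℝ) : cf 0 (X * u) = 0 := by
  rw [← pow_one (X : PowerSeries ℝ)]
  exact coeff_X_pow_mul_of_lt (by omega)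

lemma coeff_dd (e : PowerSeries ℝ) (k : ℕ) :
    cf k (dd e) = cf (k + 1) e * ((k : ℝ) + 1) := by
  rw [coeff_derivative]; try push_cast; try ring

lemma coeff_dd_dd (e : PowerSeries ℝ) (k : ℕ) :
    cf k (dd (dd e)) = cf (k + 2) e * (((k : ℝ) + 2) * ((k : ℝ) + 1)) := by
  rw [coeff_dd, coeff_dd]
  try push_cast
  try ring

lemma eq_C_of_dd_eq_zero {u : PowerSeries ℝ} (h : dd u = 0) :
    u = C (R := ℝ) (constantCoeff (R := ℝ) u) :=
  derivative.ext (by rw [h, derivative_C]) (by simp)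

lemma ode_zero (c : ℝ) (e : PowerSeries ℝ)
    (heq : C (R := ℝ) 16 * dd (dd e) + C (R := ℝ) (4 * c) * (X ^ 2 * dd (dd e)) + C (R := ℝ) (4 * c) * (X * dd e)
      = C (R := ℝ) (4 * c) * e)
    (h0 : cf 0 e = 0) (h1 : cf 1 e = 0) : e = 0 := by
  have H : ∀ n, cf n e = 0 := by
    intro n
    induction n using Nat.strong_induction_on with
    | _ n ih =>
      rcases n with _ | n
      · exact h0
      rcases n with _ | k
      · exact h1
      have hc := congrArg (cf k) heq
      simp only [map_add, coeff_C_mul] at hc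
      rcases k with _ | _ | j
      · rw [coeff_zero_X_mul, coeff_X_pow_mul_of_lt (by omega : 0 < 2)] at hc
        rw [coeff_dd_dd, h0] at hc
        have h2 : (16 * ((0:ℝ) + 2) * ((0:ℝ) + 1)) * cf 2 e = 0 := by
          push_cast at hc ⊢
          linear_combination hc
        exact (mul_eq_zero.mp h2).resolve_left (by norm_num)
      · rw [coeff_X_pow_mul_of_lt (by omega : 1 < 2)] at hc
        rw [show (X * dd e) = X ^ 1 * dd e by rw [pow_one]] at hc
        rw [show (1:ℕ) = 0 + 1 from rfl, coeff_X_pow_mul (dd e) 1 0] at hc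
        rw [coeff_dd_dd, coeff_dd, h1] at hc
        have h2 : (16 * ((1:ℝ) + 2) * ((1:ℝ) + 1)) * cf 3 e = 0 := by
          push_cast at hc ⊢
          linear_combination hc
        exact (mul_eq_zero.mp h2).resolve_left (by norm_num)
      · have hE : j + 1 + 1 = j + 2 := rfl
        rw [hE] at hc
        rw [show (X * dd e) = X ^ 1 * dd e by rw [pow_one]] at hc
        have hX1 : cf (j + 2) (X ^ 1 * dd e) = cf (j + 1) (dd e) := by
          have h := coeff_X_pow_mul (dd e) 1 (j + 1)
          rwa [show j + 1 + 1 = j + 2 from rfl] at h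
        have hX2 : cf (j + 2) (X ^ 2 * dd (dd e)) = cf j (dd (dd e)) :=
          coeff_X_pow_mul (dd (dd e)) 2 j
        rw [hX1, hX2, coeff_dd_dd, coeff_dd_dd, coeff_dd] at hc
        rw [ih (j + 2) (by omega)] at hc
        rw [show j + 1 + 1 + 1 + 1 = j + 2 + 2 from rfl]
        have h2 : (16 * (((j : ℝ) + 2) + 2) * (((j : ℝ) + 2) + 1)) * cf (j + 2 + 2) e = 0 := by
          push_cast at hc ⊢
          linear_combination hc
        exact (mul_eq_zero.mp h2).resolve_left (by positivity)
  ext n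
  rw [H n, map_zero]

end ODE

section Arsinh

/-- The series of `(1+z²)^{-1/2}`, i.e. the derivative of `arcsinh`. -/
noncomputable def Bs : PowerSeries ℝ := dd arsinhSeriesR

lemma coeff_arsinh_even {k : ℕ} (h : ¬ Odd k) : cf k arsinhSeriesR = 0 := by
  rw [arsinhSeriesR, coeff_mk, if_neg h]

lemma coeff_arsinh_odd (i : ℕ) :
    cf (2 * i + 1) arsinhSeriesR
      = (-1 : ℝ) ^ i * (Nat.factorial (2 * i) : ℝ)
          / (4 ^ i * (Nat.factorial i : ℝ) ^ 2 * (2 * (i : ℝ) + 1)) := by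
  rw [arsinhSeriesR, coeff_mk, if_pos ⟨i, by omega⟩]
  have h1 : (2 * i + 1) / 2 = i := by omega
  have h2 : 2 * i + 1 - 1 = 2 * i := by omega
  rw [h1, h2]
  push_cast
  ring

lemma coeff_B_even (i : ℕ) :
    cf (2 * i) Bs
      = (-1 : ℝ) ^ i * (Nat.factorial (2 * i) : ℝ) / (4 ^ i * (Nat.factorial i : ℝ) ^ 2) := by
  rw [Bs, coeff_dd, coeff_arsinh_odd]
  have hne : (2 * (i : ℝ) + 1) ≠ 0 := by positivity
  have h4 : ((4 : ℝ) ^ i * (Nat.factorial i : ℝ) ^ 2) ≠ 0 := by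
    have := Nat.factorial_ne_zero i
    positivity
  push_cast
  field_simp

lemma coeff_B_odd (i : ℕ) : cf (2 * i + 1) Bs = 0 := by
  rw [Bs, coeff_dd, coeff_arsinh_even (by rintro ⟨j, hj⟩; omega : ¬ Odd (2 * i + 1 + 1))]
  simp

lemma B0 : cf 0 Bs = 1 := by
  have h := coeff_B_even 0
  norm_num [Nat.factorial] at h
  simpa using h

lemma arsinh0 : cf 0 arsinhSeriesR = 0 := coeff_arsinh_even (by simp)

lemma arsinh1 : cf 1 arsinhSeriesR = 1 := by
  have h := coeff_arsinh_odd 0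
  norm_num [Nat.factorial] at h
  simpa using h

lemma hBode : (1 + X ^ 2) * dd Bs = -(X * Bs) := by
  ext n
  rw [add_mul, one_mul, map_add, map_neg]
  rcases n with _ | n
  · rw [coeff_X_pow_mul_of_lt (by omega : 0 < 2), coeff_zero_X_mul, coeff_dd]
    have h : cf (0 + 1) Bs = 0 := coeff_B_odd 0
    rw [h]
    simp
  rcases n with _ | m
  · rw [coeff_X_pow_mul_of_lt (by omega : 1 < 2)]
    have hX : cf (0 + 1) (X * Bs) = cf 0 Bs := coeff_succ_X_mul 0 Bs
    rw [show (1 : ℕ) = 0 + 1 from rfl, hX, coeff_dd, B0]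
    have h2 : cf (0 + 1 + 1) Bs = -(1 / 2 : ℝ) := by
      have h := coeff_B_even 1
      rw [show 2 * 1 = 0 + 1 + 1 from rfl] at h
      rw [h]
      norm_num [Nat.factorial]
    rw [h2]
    norm_num
  · -- n = m + 2
    have hX2 : cf (m + 2) (X ^ 2 * dd Bs) = cf m (dd Bs) := coeff_X_pow_mul (dd Bs) 2 m
    have hX : cf (m + 2) (X * Bs) = cf (m + 1) Bs := by
      have h := coeff_succ_X_mul (m + 1) Bs
      rwa [show m + 1 + 1 = m + 2 from rfl] at h
    rw [show m + 1 + 1 = m + 2 from rfl, hX2, hX, coeff_dd, coeff_dd]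
    rcases Nat.even_or_odd m with hm | hm
    · obtain ⟨i, rfl⟩ : ∃ i, m = 2 * i := by
        rcases hm with ⟨r, hr⟩; exact ⟨r, by omega⟩
      have h1 : cf (2 * i + 2 + 1) Bs = 0 := by
        have h := coeff_B_odd (i + 1)
        rwa [show 2 * (i + 1) + 1 = 2 * i + 2 + 1 by ring] at h
      have h2 : cf (2 * i + 1) Bs = 0 := coeff_B_odd i
      rw [h1, h2]
      ring
    · obtain ⟨i, rfl⟩ : ∃ i, m = 2 * i + 1 := by
        rcases hm with ⟨r, hr⟩; exact ⟨r, by omega⟩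
      have h1 : cf (2 * i + 1 + 2 + 1) Bs
          = (-1 : ℝ) ^ (i + 2) * (Nat.factorial (2 * (i + 2)) : ℝ)
              / (4 ^ (i + 2) * (Nat.factorial (i + 2) : ℝ) ^ 2) := by
        have h := coeff_B_even (i + 2)
        rwa [show 2 * (i + 2) = 2 * i + 1 + 2 + 1 by ring] at h
      have h2 : cf (2 * i + 1 + 1) Bs
          = (-1 : ℝ) ^ (i + 1) * (Nat.factorial (2 * (i + 1)) : ℝ)
              / (4 ^ (i + 1) * (Nat.factorial (i + 1) : ℝ) ^ 2) := by
        have h := coeff_B_even (i + 1)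
        rwa [show 2 * (i + 1) = 2 * i + 1 + 1 by ring] at h
      rw [h1, h2]
      have hfac2 : (Nat.factorial (2 * (i + 2)) : ℝ)
          = (2 * (i : ℝ) + 4) * (2 * (i : ℝ) + 3) * (Nat.factorial (2 * (i + 1)) : ℝ) := by
        have h : 2 * (i + 2) = (2 * (i + 1) + 1) + 1 := by ring
        rw [h, Nat.factorial_succ, Nat.factorial_succ]
        push_cast
        ring
      have hfac1 : (Nat.factorial (i + 2) : ℝ) = ((i : ℝ) + 2) * (Nat.factorial (i + 1) : ℝ) := by
        rw [Nat.factorial_succ]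
        push_cast
        ring
      have h4 : (4 : ℝ) ^ (i + 2) = 4 * 4 ^ (i + 1) := by rw [pow_succ]; ring
      rw [hfac2, hfac1, h4]
      have hne1 : (Nat.factorial (i + 1) : ℝ) ≠ 0 :=
        Nat.cast_ne_zero.mpr (Nat.factorial_ne_zero (i + 1))
      have hne2 : (Nat.factorial (2 * (i + 1)) : ℝ) ≠ 0 :=
        Nat.cast_ne_zero.mpr (Nat.factorial_ne_zero _)
      have hne4 : ((4 : ℝ) ^ (i + 1)) ≠ 0 := by positivity
      push_cast
      field_simp
      ring

lemma hB2 : (1 + X ^ 2) * Bs ^ 2 = 1 := by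
  have hdB2 : dd (Bs ^ 2) = (2 : ℕ) • (Bs ^ 1 • dd Bs) := Derivation.leibniz_pow _ _ 2
  have hdX2 : dd ((X : PowerSeries ℝ) ^ 2) = (2 : ℕ) • ((X : PowerSeries ℝ) ^ 1 • dd X) :=
    Derivation.leibniz_pow _ _ 2
  have hdU : dd ((1 + X ^ 2) * Bs ^ 2) = 0 := by
    have hl := Derivation.leibniz (PowerSeries.derivative ℝ) (1 + X ^ 2 : PowerSeries ℝ) (Bs ^ 2)
    rw [hl, hdB2, smul_eq_mul, smul_eq_mul]
    rw [map_add, Derivation.map_one_eq_zero, hdX2, derivative_X]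
    simp only [smul_eq_mul, nsmul_eq_mul, pow_one, Nat.cast_ofNat, zero_add, mul_one]
    have h : (1 + X ^ 2) * (2 * (Bs * dd Bs)) + Bs ^ 2 * (2 * X)
        = 2 * Bs * ((1 + X ^ 2) * dd Bs + X * Bs) := by ring
    rw [h, hBode]
    ring
  have hcU : constantCoeff (R := ℝ) ((1 + X ^ 2) * Bs ^ 2) = 1 := by
    rw [map_mul, map_add, map_one, map_pow, map_pow, constantCoeff_X]
    have hc : constantCoeff (R := ℝ) Bs = 1 := by
      have := B0
      rwa [coeff_zero_eq_constantCoeff] at this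
    rw [hc]
    norm_num
  rw [eq_C_of_dd_eq_zero hdU, hcU, map_one]

end Arsinh

section SinhSeries

noncomputable def fR : PowerSeries ℝ := PowerSeries.map (algebraMap ℚ ℝ) twoSinhHalf

lemma coeff_fR (n : ℕ) :
    cf n fR = (((1 : ℝ) / 2) ^ n - (-(1 / 2 : ℝ)) ^ n) / (Nat.factorial n : ℝ) := by
  rw [fR, coeff_map, twoSinhHalf, map_sub, coeff_rescale, coeff_rescale, coeff_exp]
  rw [neg_pow]
  push_cast
  push_cast
  rw [show (-(1 / 2) : ℝ) = (-1) * (1 / 2) by norm_num, mul_pow, neg_pow]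
  norm_num
  ring

lemma fR0 : cf 0 fR = 0 := by norm_num [coeff_fR]

lemma fR1 : cf 1 fR = 1 := by norm_num [coeff_fR, Nat.factorial]

lemma hfR4 : C (R := ℝ) 4 * dd (dd fR) = fR := by
  ext n
  rw [coeff_C_mul, coeff_dd_dd, coeff_fR, coeff_fR]
  have hfact : (Nat.factorial (n + 2) : ℝ)
      = ((n : ℝ) + 2) * ((n : ℝ) + 1) * (Nat.factorial n : ℝ) := by
    rw [Nat.factorial_succ, Nat.factorial_succ]
    push_cast
    ring
  have hne : (Nat.factorial n : ℝ) ≠ 0 :=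
    Nat.cast_ne_zero.mpr (Nat.factorial_ne_zero n)
  have hp1 : ((1 : ℝ) / 2) ^ (n + 2) = (1 / 2) ^ n * (1 / 4) := by
    rw [pow_succ, pow_succ]; ring
  have hp2 : (-(1 / 2) : ℝ) ^ (n + 2) = (-(1 / 2)) ^ n * (1 / 4) := by
    rw [pow_succ, pow_succ]; ring
  rw [hfact, hp1, hp2]
  field_simp

end SinhSeries

section Main

/-- `G_ρ(z) = 2 arcsinh(ρ z/2)` as a power series. -/
noncomputable def Fs (ρ : ℝ) : PowerSeries ℝ := 2 * PowerSeries.rescale (ρ / 2) arsinhSeriesR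

/-- `F_ρ / X`. -/
noncomputable def psi (ρ : ℝ) : PowerSeries ℝ := PowerSeries.mk fun n => cf (n + 1) (Fs ρ)

lemma two_eq_C : (2 : PowerSeries ℝ) = C (R := ℝ) 2 := (map_ofNat (C (R := ℝ)) 2).symm

lemma coeff_Fs (ρ : ℝ) (n : ℕ) : cf n (Fs ρ) = 2 * ((ρ / 2) ^ n * cf n arsinhSeriesR) := by
  rw [Fs, two_eq_C, coeff_C_mul, coeff_rescale]

lemma Fs0 (ρ : ℝ) : constantCoeff (R := ℝ) (Fs ρ) = 0 := by
  rw [← coeff_zero_eq_constantCoeff, coeff_Fs, arsinh0]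
  ring

lemma Fs1 (ρ : ℝ) : cf 1 (Fs ρ) = ρ := by
  rw [coeff_Fs, arsinh1]
  ring

lemma X_mul_psi (ρ : ℝ) : X * psi ρ = Fs ρ := by
  ext n
  rcases n with _ | n
  · rw [coeff_zero_X_mul, coeff_zero_eq_constantCoeff, Fs0]
  · rw [coeff_succ_X_mul, psi, coeff_mk]

lemma psi0 (ρ : ℝ) : constantCoeff (R := ℝ) (psi ρ) = ρ := by
  rw [← coeff_zero_eq_constantCoeff, psi, coeff_mk, Fs1]

lemma d_rescale (c : ℝ) (f : PowerSeries ℝ) :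
    dd (PowerSeries.rescale c f) = C (R := ℝ) c * PowerSeries.rescale c (dd f) := by
  ext n
  rw [coeff_dd, coeff_C_mul, coeff_rescale, coeff_rescale, coeff_dd]
  rw [pow_succ]
  ring

lemma dFs (ρ : ℝ) : dd (Fs ρ) = C (R := ℝ) ρ * PowerSeries.rescale (ρ / 2) Bs := by
  rw [Fs, two_eq_C]
  have hl := Derivation.leibniz (PowerSeries.derivative ℝ)
    (C (R := ℝ) 2 : PowerSeries ℝ) (PowerSeries.rescale (ρ / 2) arsinhSeriesR)
  rw [hl, derivative_C, smul_zero, add_zero, smul_eq_mul, d_rescale]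
  rw [← Bs]
  rw [show (C (R := ℝ) 2) * (C (R := ℝ) (ρ / 2) * PowerSeries.rescale (ρ / 2) Bs)
      = (C (R := ℝ) 2 * C (R := ℝ) (ρ / 2)) * PowerSeries.rescale (ρ / 2) Bs by ring]
  rw [← map_mul, show 2 * (ρ / 2) = ρ by ring]

lemma dFs0 (ρ : ℝ) : constantCoeff (R := ℝ) (dd (Fs ρ)) = ρ := by
  rw [← coeff_zero_eq_constantCoeff, coeff_dd, Fs1]
  norm_num

lemma hQ1 (ρ : ℝ) :
    dd (Fs ρ) ^ 2 * (C (R := ℝ) 4 + C (R := ℝ) (ρ ^ 2) * X ^ 2) = C (R := ℝ) (4 * ρ ^ 2) := by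
  have h := congrArg (PowerSeries.rescale (ρ / 2)) hB2
  rw [map_mul, map_add, map_one, map_pow, map_pow, rescale_X] at h
  rw [dFs]
  have hρ2 : C (R := ℝ) (ρ ^ 2) = 4 * C (R := ℝ) (ρ / 2) ^ 2 := by
    rw [← map_pow, show (4 : PowerSeries ℝ) = C (R := ℝ) 4 from (map_ofNat (C (R := ℝ)) 4).symm, ← map_mul]
    congr 1
    ring
  have hρ1 : C (R := ℝ) ρ = 2 * C (R := ℝ) (ρ / 2) := by
    rw [two_eq_C, ← map_mul]
    congr 1
    ring
  have hρ4 : C (R := ℝ) (4 * ρ ^ 2) = 16 * C (R := ℝ) (ρ / 2) ^ 2 := by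
    rw [← map_pow, show (16 : PowerSeries ℝ) = C (R := ℝ) 16 from (map_ofNat (C (R := ℝ)) 16).symm, ← map_mul]
    congr 1
    ring
  have hC4 : (C (R := ℝ) 4 : PowerSeries ℝ) = 4 := map_ofNat (C (R := ℝ)) 4
  rw [hρ2, hρ1, hρ4, hC4]
  linear_combination (16 * (C (R := ℝ) (ρ / 2)) ^ 2) * h

lemma hQ2 (ρ : ℝ) (hρ : ρ ≠ 0) :
    (C (R := ℝ) 4 + C (R := ℝ) (ρ ^ 2) * X ^ 2) * dd (dd (Fs ρ))
      = -(C (R := ℝ) (ρ ^ 2) * (X * dd (Fs ρ))) := by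
  have h := congrArg (PowerSeries.derivative ℝ) (hQ1 ρ)
  rw [derivative_C] at h
  have hl := Derivation.leibniz (PowerSeries.derivative ℝ)
    (dd (Fs ρ) ^ 2) (C (R := ℝ) 4 + C (R := ℝ) (ρ ^ 2) * X ^ 2)
  have hd1 : dd (dd (Fs ρ) ^ 2) = (2 : ℕ) • (dd (Fs ρ) ^ 1 • dd (dd (Fs ρ))) :=
    Derivation.leibniz_pow _ _ 2
  have hd2 : dd ((X : PowerSeries ℝ) ^ 2) = (2 : ℕ) • ((X : PowerSeries ℝ) ^ 1 • dd X) :=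
    Derivation.leibniz_pow _ _ 2
  have hl2 := Derivation.leibniz (PowerSeries.derivative ℝ)
    (C (R := ℝ) (ρ ^ 2)) ((X : PowerSeries ℝ) ^ 2)
  rw [hl, hd1, map_add, derivative_C, hl2, hd2, derivative_C, derivative_X] at h
  simp only [smul_eq_mul, nsmul_eq_mul, pow_one, Nat.cast_ofNat, zero_add, mul_one,
    mul_zero, add_zero, smul_zero] at h
  -- h : dF^2 * (C ρ² * (2 * X)) + (C4 + Cρ²X²) * (2 * (dF * ddF)) = 0
  have hfac : dd (Fs ρ) ^ 2 * (C (R := ℝ) (ρ ^ 2) * (2 * X))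
      + (C (R := ℝ) 4 + C (R := ℝ) (ρ ^ 2) * X ^ 2) * (2 * (dd (Fs ρ) * dd (dd (Fs ρ))))
      = (2 * dd (Fs ρ)) * ((C (R := ℝ) 4 + C (R := ℝ) (ρ ^ 2) * X ^ 2) * dd (dd (Fs ρ))
          + C (R := ℝ) (ρ ^ 2) * (X * dd (Fs ρ))) := by ring
  rw [hfac] at h
  have h2ne : (2 * dd (Fs ρ)) ≠ 0 := by
    intro hz
    have hc := congrArg (constantCoeff (R := ℝ)) hz
    rw [map_mul, dFs0, map_zero,
      show ((constantCoeff (R := ℝ)) (2 : PowerSeries ℝ)) = 2 by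
        rw [two_eq_C, constantCoeff_C]] at hc
    exact hρ (by linarith)
  have hz := (mul_eq_zero.mp h).resolve_left h2ne
  linear_combination hz

lemma pcomp_C_mul {F : PowerSeries ℝ} (hF : constantCoeff (R := ℝ) F = 0) (c : ℝ) (u : PowerSeries ℝ) :
    pcomp (C (R := ℝ) c * u) F = C (R := ℝ) c * pcomp u F := by
  rw [pcomp_mul hF, pcomp_C hF]

lemma pcomp_fR_Fs (ρ : ℝ) (hρ : ρ ≠ 0) : pcomp fR (Fs ρ) = C (R := ℝ) ρ * X := by
  have hF0 : constantCoeff (R := ℝ) (Fs ρ) = 0 := Fs0 ρ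
  have hdg : dd (pcomp fR (Fs ρ)) = pcomp (dd fR) (Fs ρ) * dd (Fs ρ) := d_pcomp hF0 fR
  have hdh : dd (pcomp (dd fR) (Fs ρ)) = pcomp (dd (dd fR)) (Fs ρ) * dd (Fs ρ) :=
    d_pcomp hF0 (dd fR)
  have h4h : C (R := ℝ) 4 * pcomp (dd (dd fR)) (Fs ρ) = pcomp fR (Fs ρ) := by
    rw [← pcomp_C_mul hF0, hfR4]
  -- second derivative of g
  have hddg : dd (dd (pcomp fR (Fs ρ)))
      = pcomp (dd (dd fR)) (Fs ρ) * dd (Fs ρ) ^ 2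
        + pcomp (dd fR) (Fs ρ) * dd (dd (Fs ρ)) := by
    rw [hdg]
    have hl := Derivation.leibniz (PowerSeries.derivative ℝ)
      (pcomp (dd fR) (Fs ρ)) (dd (Fs ρ))
    rw [hl, smul_eq_mul, smul_eq_mul, hdh]
    ring
  -- master equation
  have master : (C (R := ℝ) 4 + C (R := ℝ) (ρ ^ 2) * X ^ 2) * (C (R := ℝ) 4 * dd (dd (pcomp fR (Fs ρ))))
      + C (R := ℝ) (4 * ρ ^ 2) * (X * dd (pcomp fR (Fs ρ)))
      = C (R := ℝ) (4 * ρ ^ 2) * pcomp fR (Fs ρ) := by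
    have e1 : C (R := ℝ) 4 * dd (dd (pcomp fR (Fs ρ)))
        = pcomp fR (Fs ρ) * dd (Fs ρ) ^ 2
          + C (R := ℝ) 4 * (pcomp (dd fR) (Fs ρ) * dd (dd (Fs ρ))) := by
      rw [hddg]
      have : C (R := ℝ) 4 * (pcomp (dd (dd fR)) (Fs ρ) * dd (Fs ρ) ^ 2
            + pcomp (dd fR) (Fs ρ) * dd (dd (Fs ρ)))
          = (C (R := ℝ) 4 * pcomp (dd (dd fR)) (Fs ρ)) * dd (Fs ρ) ^ 2
            + C (R := ℝ) 4 * (pcomp (dd fR) (Fs ρ) * dd (dd (Fs ρ))) := by ring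
      rw [this, h4h]
    have hC44 : C (R := ℝ) (4 * ρ ^ 2) = C (R := ℝ) 4 * C (R := ℝ) (ρ ^ 2) := by rw [← map_mul]
    rw [e1, hC44]
    have expand : (C (R := ℝ) 4 + C (R := ℝ) (ρ ^ 2) * X ^ 2)
          * (pcomp fR (Fs ρ) * dd (Fs ρ) ^ 2
            + C (R := ℝ) 4 * (pcomp (dd fR) (Fs ρ) * dd (dd (Fs ρ))))
        = pcomp fR (Fs ρ) * (dd (Fs ρ) ^ 2 * (C (R := ℝ) 4 + C (R := ℝ) (ρ ^ 2) * X ^ 2))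
          + C (R := ℝ) 4 * pcomp (dd fR) (Fs ρ)
            * ((C (R := ℝ) 4 + C (R := ℝ) (ρ ^ 2) * X ^ 2) * dd (dd (Fs ρ))) := by ring
    rw [expand, hQ1 ρ, hQ2 ρ hρ, hdg]
    rw [show C (R := ℝ) (4 * ρ ^ 2) = C (R := ℝ) 4 * C (R := ℝ) (ρ ^ 2) from by rw [← map_mul]]
    ring
  -- set e := g - C ρ * X and apply the uniqueness lemma
  have hde : dd (pcomp fR (Fs ρ) - C (R := ℝ) ρ * X) = dd (pcomp fR (Fs ρ)) - C (R := ℝ) ρ := by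
    rw [map_sub]
    have hl := Derivation.leibniz (PowerSeries.derivative ℝ) (C (R := ℝ) ρ) (X : PowerSeries ℝ)
    rw [hl, derivative_C, derivative_X, smul_zero, add_zero, smul_eq_mul, mul_one]
  have hdde : dd (dd (pcomp fR (Fs ρ) - C (R := ℝ) ρ * X)) = dd (dd (pcomp fR (Fs ρ))) := by
    rw [hde, map_sub, derivative_C, sub_zero]
  have h0e : cf 0 (pcomp fR (Fs ρ) - C (R := ℝ) ρ * X) = 0 := by
    rw [map_sub]
    have hg0 : cf 0 (pcomp fR (Fs ρ)) = 0 := by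
      rw [coeff_pcomp, show (0 : ℕ) + 1 = 1 from rfl, Finset.sum_range_one, fR0, zero_mul]
    rw [hg0, coeff_C_mul, coeff_X]
    norm_num
  have h1e : cf 1 (pcomp fR (Fs ρ) - C (R := ℝ) ρ * X) = 0 := by
    rw [map_sub]
    have hg1 : cf 1 (pcomp fR (Fs ρ)) = ρ := by
      rw [coeff_pcomp, show (1 : ℕ) + 1 = 2 from rfl, Finset.sum_range_succ,
        Finset.sum_range_one, fR0, fR1, pow_one, Fs1]
      norm_num
    rw [hg1, coeff_C_mul, coeff_X]
    norm_num
  have heq : C (R := ℝ) 16 * dd (dd (pcomp fR (Fs ρ) - C (R := ℝ) ρ * X))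
      + C (R := ℝ) (4 * ρ ^ 2) * (X ^ 2 * dd (dd (pcomp fR (Fs ρ) - C (R := ℝ) ρ * X)))
      + C (R := ℝ) (4 * ρ ^ 2) * (X * dd (pcomp fR (Fs ρ) - C (R := ℝ) ρ * X))
      = C (R := ℝ) (4 * ρ ^ 2) * (pcomp fR (Fs ρ) - C (R := ℝ) ρ * X) := by
    rw [hdde, hde]
    have hC16 : (C (R := ℝ) 16 : PowerSeries ℝ) = C (R := ℝ) 4 * C (R := ℝ) 4 := by rw [← map_mul]; norm_num
    have hC44 : C (R := ℝ) (4 * ρ ^ 2) = C (R := ℝ) 4 * C (R := ℝ) (ρ ^ 2) := by rw [← map_mul]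
    rw [hC44] at master
    rw [hC16, hC44]
    linear_combination master
  have := ode_zero (ρ ^ 2) _ heq h0e h1e
  have hfinal : pcomp fR (Fs ρ) = C (R := ℝ) ρ * X := by
    have h := sub_eq_zero.mp this
    exact h
  exact hfinal

end Main

end WAux

open WAux Finset

/-- Weingart's generating function: with `a_n = [t^n]((t/(2 sinh(t/2)))^n)` and
`η_n = 2 a_n ρ^n`, the identity
`(1 + (1/2) Σ_{n≥1} η_n z^n) · G_ρ(z) = z · G_ρ'(z)` holds in `ℝ[[z]]`,
where `G_ρ(z) = 2·arcsinh(ρz/2)` as a power series. -/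
theorem weingart_generating_function
    (ρ : ℝ) (φ : PowerSeries ℚ) (hφ : φ * twoSinhHalf = PowerSeries.X) :
    (PowerSeries.mk fun n =>
        if n = 0 then (1 : ℝ)
        else (1 / 2) * (2 * ((PowerSeries.coeff (R := ℚ) n (φ ^ n) : ℚ) : ℝ) * ρ ^ n))
      * (2 * PowerSeries.rescale (ρ / 2) arsinhSeriesR)
    = PowerSeries.X * D (2 * PowerSeries.rescale (ρ / 2) arsinhSeriesR) := by
  rw [WAux.D_eq]
  by_cases hρ : ρ = 0
  · subst hρ
    have hF : (2 * PowerSeries.rescale ((0 : ℝ) / 2) arsinhSeriesR : PowerSeries ℝ) = 0 := by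
      rw [show ((0 : ℝ) / 2) = 0 by norm_num, PowerSeries.rescale_zero]
      rw [RingHom.comp_apply]
      rw [← PowerSeries.coeff_zero_eq_constantCoeff_apply, WAux.arsinh0, map_zero, mul_zero]
    rw [hF, mul_zero, map_zero, mul_zero]
  · show (PowerSeries.mk fun n =>
        if n = 0 then (1 : ℝ)
        else (1 / 2) * (2 * ((PowerSeries.coeff (R := ℚ) n (φ ^ n) : ℚ) : ℝ) * ρ ^ n))
      * WAux.Fs ρ = PowerSeries.X * PowerSeries.derivative ℝ (WAux.Fs ρ)
    have hψ0 : constantCoeff (R := ℝ) (psi ρ) = ρ := psi0 ρ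
    have hψne : constantCoeff (R := ℝ) (psi ρ) ≠ 0 := by rw [hψ0]; exact hρ
    have hXψ : X * psi ρ = Fs ρ := X_mul_psi ρ
    have hinv : (psi ρ)⁻¹ * psi ρ = 1 := PowerSeries.inv_mul_cancel _ hψne
    have hunit : psi ρ * (psi ρ)⁻¹ = 1 := PowerSeries.mul_inv_cancel _ hψne
    have hφR : PowerSeries.map (algebraMap ℚ ℝ) φ * fR = X := by
      rw [fR, ← map_mul, hφ, PowerSeries.map_X]
    have hcomp : pcomp (PowerSeries.map (algebraMap ℚ ℝ) φ) (Fs ρ) * (C (R := ℝ) ρ * X) = Fs ρ := by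
      rw [← pcomp_fR_Fs ρ hρ, ← pcomp_mul (Fs0 ρ), hφR, pcomp_X (Fs0 ρ)]
    have h2 : pcomp (PowerSeries.map (algebraMap ℚ ℝ) φ) (Fs ρ) * C (R := ℝ) ρ = psi ρ := by
      apply mul_left_cancel₀ (PowerSeries.X_ne_zero : (X : PowerSeries ℝ) ≠ 0)
      calc X * (pcomp (PowerSeries.map (algebraMap ℚ ℝ) φ) (Fs ρ) * C (R := ℝ) ρ)
          = pcomp (PowerSeries.map (algebraMap ℚ ℝ) φ) (Fs ρ) * (C (R := ℝ) ρ * X) := by ring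
        _ = Fs ρ := hcomp
        _ = X * psi ρ := hXψ.symm
    have hφF : pcomp (PowerSeries.map (algebraMap ℚ ℝ) φ) (Fs ρ) = C (R := ℝ) ρ⁻¹ * psi ρ := by
      calc pcomp (PowerSeries.map (algebraMap ℚ ℝ) φ) (Fs ρ)
          = pcomp (PowerSeries.map (algebraMap ℚ ℝ) φ) (Fs ρ) * (C (R := ℝ) ρ * C (R := ℝ) ρ⁻¹) := by
            rw [← map_mul, mul_inv_cancel₀ hρ, map_one, mul_one]
        _ = C (R := ℝ) ρ⁻¹ * (pcomp (PowerSeries.map (algebraMap ℚ ℝ) φ) (Fs ρ) * C (R := ℝ) ρ) := by ring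
        _ = C (R := ℝ) ρ⁻¹ * psi ρ := by rw [h2]
    have hL : (PowerSeries.mk fun n =>
        if n = 0 then (1 : ℝ)
        else (1 / 2) * (2 * ((PowerSeries.coeff (R := ℚ) n (φ ^ n) : ℚ) : ℝ) * ρ ^ n))
        = PowerSeries.derivative ℝ (Fs ρ) * (psi ρ)⁻¹ := by
      ext n
      rw [PowerSeries.coeff_mk]
      rcases n with _ | n
      · rw [if_pos rfl, PowerSeries.coeff_zero_eq_constantCoeff, map_mul, dFs0,
          PowerSeries.constantCoeff_inv, hψ0]
        exact (mul_inv_cancel₀ hρ).symm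
      · rw [if_neg (Nat.succ_ne_zero n)]
        have hkey := WAux.key hψne (PowerSeries.map (algebraMap ℚ ℝ) (φ ^ (n + 1))) (n + 1)
        rw [hXψ, map_pow, pcomp_pow (Fs0 ρ), hφF] at hkey
        have hsimp : (C (R := ℝ) ρ⁻¹ * psi ρ) ^ (n + 1)
              * (PowerSeries.derivative ℝ (Fs ρ) * ((psi ρ)⁻¹) ^ (n + 1 + 1))
            = C (R := ℝ) (ρ⁻¹ ^ (n + 1)) * ((psi ρ * (psi ρ)⁻¹) ^ (n + 1)
              * (PowerSeries.derivative ℝ (Fs ρ) * (psi ρ)⁻¹)) := by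
          rw [map_pow]
          ring
        rw [hsimp, hunit, one_pow, one_mul, PowerSeries.coeff_C_mul] at hkey
        have hq : PowerSeries.coeff (R := ℝ) (n + 1)
              (PowerSeries.map (algebraMap ℚ ℝ) φ ^ (n + 1))
            = ((PowerSeries.coeff (R := ℚ) (n + 1) (φ ^ (n + 1)) : ℚ) : ℝ) := by
          rw [← map_pow, PowerSeries.coeff_map, eq_ratCast]
        rw [hq] at hkey
        have hpne : ρ ^ (n + 1) ≠ 0 := pow_ne_zero _ hρ
        rw [inv_pow] at hkey
        have hV : PowerSeries.coeff (R := ℝ) (n + 1) (PowerSeries.derivative ℝ (Fs ρ) * (psi ρ)⁻¹)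
            = ρ ^ (n + 1) * ((PowerSeries.coeff (R := ℚ) (n + 1) (φ ^ (n + 1)) : ℚ) : ℝ) := by
          field_simp at hkey
          linarith [hkey]
        rw [hV]
        ring
    rw [hL]
    calc PowerSeries.derivative ℝ (Fs ρ) * (psi ρ)⁻¹ * Fs ρ
        = PowerSeries.derivative ℝ (Fs ρ) * (psi ρ)⁻¹ * (X * psi ρ) := by rw [hXψ]
      _ = X * PowerSeries.derivative ℝ (Fs ρ) * ((psi ρ)⁻¹ * psi ρ) := by ring
      _ = X * PowerSeries.derivative ℝ (Fs ρ) := by rw [hinv, mul_one]
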